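/- Let r be a database instance over a finite domain D and IC a set of binary integrity constraints. For every repair r′ of r wrt IC, there exists an answer set S of the repair program Π(r) such that r′ = {p(ā) | p′(ā) ∈ S}. -/

import Mathlib

namespace CQA

/-! ## Ground disjunctive extended logic programs and answer sets -/

/-- Ground literals over atoms of type `α`: atoms and classically negated atoms. -/
inductive Lit (α : Type) : Type
  | pos : α → Lit α
  | neg : α → Lit α

/-- Complement of a ground literal. -/
def Lit.compl {α : Type} : Lit α → Lit α
  | .pos a => .neg a
  | .neg a => .pos a

/-- A ground disjunctive rule `⋁ head ← body, not nbody`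
(`nbody` collects the literals occurring under weak negation `not`). -/
structure Rule (α : Type) where
  head : Set (Lit α)
  body : Set (Lit α)
  nbody : Set (Lit α)

/-- A ground disjunctive extended logic program: a set of ground rules. -/
abbrev Program (α : Type) := Set (Rule α)

/-- A fact. -/
def fact {α : Type} (L : Lit α) : Rule α := ⟨{L}, ∅, ∅⟩

/-- `S` contains no complementary pair of literals. -/
def Coherent {α : Type} (S : Set (Lit α)) : Prop :=
  ∀ a : α, ¬ (Lit.pos a ∈ S ∧ Lit.neg a ∈ S)

/-- `S` satisfies every rule of `P`, reading `not L` as `L ∉ S`: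
whenever all body literals are in `S` and no weakly negated literal is in `S`,
some head disjunct is in `S`. -/
def SatProg {α : Type} (S : Set (Lit α)) (P : Program α) : Prop :=
  ∀ R ∈ P, R.body ⊆ S → (∀ L ∈ R.nbody, L ∉ S) → ∃ L ∈ R.head, L ∈ S

/-- A model of a ground program: a set of ground literals without complementary
pairs satisfying every rule, with `not L` read as `L ∉ S`. -/
def IsModel {α : Type} (S : Set (Lit α)) (P : Program α) : Prop :=
  Coherent S ∧ SatProg S P

/-- The Gelfond–Lifschitz reduct of `P` with respect to `S`: delete every rule
whose body contains `not L` with `L ∈ S`, then delete all remaining `not L`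
conditions. -/
def reduct {α : Type} (P : Program α) (S : Set (Lit α)) : Program α :=
  {R' | ∃ R ∈ P, (∀ L ∈ R.nbody, L ∉ S) ∧ R' = Rule.mk R.head R.body ∅}

/-- `S` is an answer set of `P`: `S` has no complementary pair and is a minimal
model of the reduct `^S P`. -/
def AnswerSet {α : Type} (S : Set (Lit α)) (P : Program α) : Prop :=
  Coherent S ∧ SatProg S (reduct P S) ∧
    ∀ S' : Set (Lit α), S' ⊆ S → SatProg S' (reduct P S) → S' = S

/-- The intersection of all answer sets of `P`. -/
def Core {α : Type} (P : Program α) : Set (Lit α) :=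
  {L | ∀ S : Set (Lit α), AnswerSet S P → L ∈ S}

/-! ## Well-founded semantics for ground extended disjunctive programs -/

/-- The body of rule `R` is true in the partial interpretation `I`:
the body literals belong to `I` and every weakly negated literal is false
(its complement belongs to `I`). -/
def bodyTrue {α : Type} (I : Set (Lit α)) (R : Rule α) : Prop :=
  R.body ⊆ I ∧ ∀ L ∈ R.nbody, L.compl ∈ I

/-- Immediate-consequence operator `T_Π(I)`: all literals occurring in the head
of a rule whose body is true in `I` and whose remaining head disjuncts are
false in `I`. -/
def Timm {α : Type} (P : Program α) (I : Set (Lit α)) : Set (Lit α) :=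
  {L | ∃ R ∈ P, L ∈ R.head ∧ bodyTrue I R ∧ ∀ L' ∈ R.head, L' ≠ L → L'.compl ∈ I}

/-- `X` is an unfounded set of literals with respect to `I`: for every `L ∈ X`
and every rule with `L` in its head, either the body is false or defeated
(some body literal has its complement in `I` or lies in `X`, or some weakly
negated literal is in `I`), or the head is already satisfied by `I`
independently of `X`. -/
def UnfoundedSet {α : Type} (P : Program α) (I X : Set (Lit α)) : Prop :=
  ∀ L ∈ X, ∀ R ∈ P, L ∈ R.head →
    (∃ B ∈ R.body, B.compl ∈ I ∨ B ∈ X) ∨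
    (∃ B ∈ R.nbody, B ∈ I) ∨
    (∃ L' ∈ R.head, L' ≠ L ∧ L' ∈ I ∧ L' ∉ X)

/-- The greatest unfounded set of `P` with respect to `I`. -/
def GUS {α : Type} (P : Program α) (I : Set (Lit α)) : Set (Lit α) :=
  ⋃₀ {X | UnfoundedSet P I X}

/-- The well-founded operator `𝒲_Π(I) := T_Π(I) ∪ ¬.GUS_Π(I)`. -/
def WOp {α : Type} (P : Program α) (I : Set (Lit α)) : Set (Lit α) :=
  Timm P I ∪ Lit.compl '' GUS P I

/-- The well-founded interpretation `W_Π`, the least fixpoint `𝒲_Π^ω(∅)`. -/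
def WFInterp {α : Type} (P : Program α) : Set (Lit α) :=
  ⋃ n : ℕ, (WOp P)^[n] ∅

/-! ## Relational databases and binary integrity constraints -/

/-- A ground database atom `p(ā)` over predicates `Pred` and domain `D`. -/
abbrev DBAtom (Pred D : Type) := Pred × List D

/-- A database instance over the schema `(Pred, ar)` and domain `D`:
a finite set of ground atoms respecting the arities. -/
structure Instance (Pred D : Type) (ar : Pred → ℕ) where
  atoms : Set (DBAtom Pred D)
  finite : atoms.Finite
  wf : ∀ a ∈ atoms, a.2.length = ar a.1

/-- A binary integrity constraint in standard format
`∀ (⋁_i p_i(x̄_i) ∨ ⋁_i ¬q_i(ȳ_i) ∨ φ)` with `1 ≤ n + m ≤ 2`,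
where `φ` is a formula of built-in predicates with fixed extensions
(represented semantically as a predicate on variable assignments). -/
structure BIC (Pred D : Type) (ar : Pred → ℕ) where
  nvars : ℕ
  pos : List (Pred × List (Fin nvars))
  neg : List (Pred × List (Fin nvars))
  builtin : (Fin nvars → D) → Prop
  wfpos : ∀ a ∈ pos, a.2.length = ar a.1
  wfneg : ∀ a ∈ neg, a.2.length = ar a.1
  lb : 1 ≤ pos.length + neg.length
  ub : pos.length + neg.length ≤ 2

variable {Pred D : Type} {ar : Pred → ℕ}

/-- The ground clause of constraint `c` under the assignment `ν` holds in the
set of atoms `A`. -/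
def BIC.holdsAt (c : BIC Pred D ar) (A : Set (DBAtom Pred D)) (ν : Fin c.nvars → D) : Prop :=
  (∃ a ∈ c.pos, (a.1, a.2.map ν) ∈ A) ∨ (∃ a ∈ c.neg, (a.1, a.2.map ν) ∉ A) ∨ c.builtin ν

/-- The set of atoms `A` (as a Herbrand structure over `D`) satisfies all
constraints in `IC`. -/
def SatSet (A : Set (DBAtom Pred D)) (IC : Set (BIC Pred D ar)) : Prop :=
  ∀ c ∈ IC, ∀ ν : Fin c.nvars → D, c.holdsAt A ν

/-- The instance `r` satisfies the set of integrity constraints `IC`. -/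
def SatIC (r : Instance Pred D ar) (IC : Set (BIC Pred D ar)) : Prop :=
  SatSet r.atoms IC

/-- `r'` is a repair of `r` w.r.t. `IC`: `r' ⊨ IC` and the symmetric difference
`Δ(r,r')` is minimal under set inclusion in `{Δ(r,r*) | r* ⊨ IC}`. -/
def IsRepair (r r' : Instance Pred D ar) (IC : Set (BIC Pred D ar)) : Prop :=
  SatIC r' IC ∧
    ∀ r'' : Instance Pred D ar, SatIC r'' IC →
      symmDiff r.atoms r''.atoms ⊆ symmDiff r.atoms r'.atoms →
      symmDiff r.atoms r''.atoms = symmDiff r.atoms r'.atoms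

/-- `r'` is a Dalal repair of `r` w.r.t. `IC`: `r' ⊨ IC` and the cardinality
`|Δ(r,r')|` is minimal in `{|Δ(r,r*)| : r* ⊨ IC}`. -/
def IsDalalRepair (r r' : Instance Pred D ar) (IC : Set (BIC Pred D ar)) : Prop :=
  SatIC r' IC ∧
    ∀ r'' : Instance Pred D ar, SatIC r'' IC →
      (symmDiff r.atoms r'.atoms).ncard ≤ (symmDiff r.atoms r''.atoms).ncard

/-! ## The change program and the repair program -/

/-- Atoms of the repair programs: database atoms `p(ā)`, primed atoms `p′(ā)`,
and domain atoms `dom(a)` (playing the role of `act_r(a)` when grounding over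
the active domain). -/
inductive GAtom (Pred D : Type) : Type
  | base : Pred → List D → GAtom Pred D
  | primed : Pred → List D → GAtom Pred D
  | dom : D → GAtom Pred D

/-- Variables occurring in a list of atoms with variable tuples. -/
def varsIn {n : ℕ} (l : List (Pred × List (Fin n))) : Set (Fin n) :=
  {v | ∃ a ∈ l, v ∈ a.2}

/-- The domain atoms `dom(ν v)` for the variables `v ∈ V`. -/
def domBody {n : ℕ} (ν : Fin n → D) (V : Set (Fin n)) : Set (Lit (GAtom Pred D)) :=
  {L | ∃ v ∈ V, L = Lit.pos (GAtom.dom (ν v))}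

/-- The positive primed head disjuncts `p′_i(ν x̄_i)` of constraint `c`. -/
def posHead (c : BIC Pred D ar) (ν : Fin c.nvars → D) : Set (Lit (GAtom Pred D)) :=
  {L | ∃ a ∈ c.pos, L = Lit.pos (GAtom.primed a.1 (a.2.map ν))}

/-- The negative primed head disjuncts `¬q′_i(ν ȳ_i)` of constraint `c`. -/
def negHead (c : BIC Pred D ar) (ν : Fin c.nvars → D) : Set (Lit (GAtom Pred D)) :=
  {L | ∃ a ∈ c.neg, L = Lit.neg (GAtom.primed a.1 (a.2.map ν))}

/-- The triggering rule of constraint `c` at assignment `ν`: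
`⋁ p′_i ∨ ⋁ ¬q′_i ← dom(x̄_1,…,x̄_n), not p_1,…,not p_n, q_1,…,q_m, not φ`
(the condition `not φ` on the built-in formula, which has a fixed extension,
is accounted for by including the ground rule only when `φ(ν)` is false). -/
def trigRule (c : BIC Pred D ar) (ν : Fin c.nvars → D) : Rule (GAtom Pred D) where
  head := posHead c ν ∪ negHead c ν
  body := domBody ν (varsIn c.pos) ∪
    {L | ∃ a ∈ c.neg, L = Lit.pos (GAtom.base a.1 (a.2.map ν))}
  nbody := {L | ∃ a ∈ c.pos, L = Lit.pos (GAtom.base a.1 (a.2.map ν))}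

/-- The stabilizing rule of `c` at `ν` for the `j`-th positive database literal:
remove `p′_j` from the disjunctive head and add its complement `¬p′_j` to the
body, together with the `dom` atoms and `not φ`. -/
def stabPosRule (c : BIC Pred D ar) (ν : Fin c.nvars → D) (j : Fin c.pos.length) :
    Rule (GAtom Pred D) where
  head := {L | ∃ i : Fin c.pos.length, i ≠ j ∧
      L = Lit.pos (GAtom.primed (c.pos.get i).1 ((c.pos.get i).2.map ν))} ∪ negHead c ν
  body := domBody ν (varsIn c.pos ∪ varsIn c.neg) ∪
    {Lit.neg (GAtom.primed (c.pos.get j).1 ((c.pos.get j).2.map ν))}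
  nbody := ∅

/-- The stabilizing rule of `c` at `ν` for the `j`-th negative database literal:
remove `¬q′_j` from the disjunctive head and add its complement `q′_j` to the
body, together with the `dom` atoms and `not φ`. -/
def stabNegRule (c : BIC Pred D ar) (ν : Fin c.nvars → D) (j : Fin c.neg.length) :
    Rule (GAtom Pred D) where
  head := posHead c ν ∪ {L | ∃ i : Fin c.neg.length, i ≠ j ∧
      L = Lit.neg (GAtom.primed (c.neg.get i).1 ((c.neg.get i).2.map ν))}
  body := domBody ν (varsIn c.pos ∪ varsIn c.neg) ∪
    {Lit.pos (GAtom.primed (c.neg.get j).1 ((c.neg.get j).2.map ν))}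
  nbody := ∅

/-- The change program `Π_Δ(r)` grounded over the subdomain `A ⊆ D`:
facts for `r` and for the (active) domain, triggering rules and stabilizing
rules for all constraints in `IC`. -/
def changeProgOn (r : Instance Pred D ar) (IC : Set (BIC Pred D ar)) (A : Set D) :
    Program (GAtom Pred D) :=
  {R | ∃ a ∈ r.atoms, R = fact (Lit.pos (GAtom.base a.1 a.2))} ∪
  {R | ∃ d ∈ A, R = fact (Lit.pos (GAtom.dom d))} ∪
  {R | ∃ c ∈ IC, ∃ ν : Fin c.nvars → D, (∀ i, ν i ∈ A) ∧ ¬ c.builtin ν ∧ R = trigRule c ν} ∪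
  {R | ∃ c ∈ IC, ∃ ν : Fin c.nvars → D, (∀ i, ν i ∈ A) ∧ ¬ c.builtin ν ∧
        ∃ j : Fin c.pos.length, R = stabPosRule c ν j} ∪
  {R | ∃ c ∈ IC, ∃ ν : Fin c.nvars → D, (∀ i, ν i ∈ A) ∧ ¬ c.builtin ν ∧
        ∃ j : Fin c.neg.length, R = stabNegRule c ν j}

/-- The change program `Π_Δ(r)` grounded over the full domain `D`. -/
def changeProg (r : Instance Pred D ar) (IC : Set (BIC Pred D ar)) :
    Program (GAtom Pred D) :=
  changeProgOn r IC Set.univ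

/-- The persistence rules `p′(x̄) ← p(x̄), not ¬p′(x̄)` and
`¬p′(x̄) ← dom(x̄), not p(x̄), not p′(x̄)`, grounded over `A ⊆ D`. -/
def persistProgOn (ar : Pred → ℕ) (A : Set D) : Program (GAtom Pred D) :=
  {R | ∃ (p : Pred) (t : List D), t.length = ar p ∧ (∀ d ∈ t, d ∈ A) ∧
    (R = Rule.mk {Lit.pos (GAtom.primed p t)} {Lit.pos (GAtom.base p t)}
          {Lit.neg (GAtom.primed p t)} ∨
     R = Rule.mk {Lit.neg (GAtom.primed p t)} {L | ∃ d ∈ t, L = Lit.pos (GAtom.dom d)}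
          {Lit.pos (GAtom.base p t), Lit.pos (GAtom.primed p t)})}

/-- The repair program `Π(r)` grounded over `A ⊆ D`: the change program plus
the persistence rules. -/
def repairProgOn (r : Instance Pred D ar) (IC : Set (BIC Pred D ar)) (A : Set D) :
    Program (GAtom Pred D) :=
  changeProgOn r IC A ∪ persistProgOn ar A

/-- The repair program `Π(r)` grounded over the full domain `D`. -/
def repairProg (r : Instance Pred D ar) (IC : Set (BIC Pred D ar)) :
    Program (GAtom Pred D) :=
  repairProgOn r IC Set.univ

/-- The database instance corresponding to a set of ground literals:
`I(S) = {p(ā) | p′(ā) ∈ S} ∪ {p(ā) | p(ā) ∈ S and ¬p′(ā) ∉ S}`. -/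
def IofS (S : Set (Lit (GAtom Pred D))) : Set (DBAtom Pred D) :=
  {a | Lit.pos (GAtom.primed a.1 a.2) ∈ S} ∪
  {a | Lit.pos (GAtom.base a.1 a.2) ∈ S ∧ Lit.neg (GAtom.primed a.1 a.2) ∉ S}

/-- The database instance `{p(ā) | p′(ā) ∈ S}` extracted from the primed
atoms of `S`. -/
def primedAtoms (S : Set (Lit (GAtom Pred D))) : Set (DBAtom Pred D) :=
  {a | Lit.pos (GAtom.primed a.1 a.2) ∈ S}

/-- `S(r,r′) = {p(ā) | p(ā) ∈ r} ∪ {p′(ā) | p(ā) ∈ r′} ∪ {¬p′(ā) | p(ā) ∉ r′}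
∪ {dom(a) | a ∈ D}`. -/
def SofRR (r r' : Instance Pred D ar) : Set (Lit (GAtom Pred D)) :=
  {L | ∃ a ∈ r.atoms, L = Lit.pos (GAtom.base a.1 a.2)} ∪
  {L | ∃ a ∈ r'.atoms, L = Lit.pos (GAtom.primed a.1 a.2)} ∪
  {L | ∃ a : DBAtom Pred D, a.2.length = ar a.1 ∧ a ∉ r'.atoms ∧
        L = Lit.neg (GAtom.primed a.1 a.2)} ∪
  {L | ∃ d : D, L = Lit.pos (GAtom.dom d)}

/-! ## Active domain and domain independence -/

/-- The active domain of `r`: the constants occurring in `r`. -/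
def ActDom (r : Instance Pred D ar) : Set D :=
  {d | ∃ a ∈ r.atoms, d ∈ a.2}

/-- Satisfaction of `IC` in `A` relativized to the subdomain `Dm`. -/
def SatSetOn (A : Set (DBAtom Pred D)) (IC : Set (BIC Pred D ar)) (Dm : Set D) : Prop :=
  ∀ c ∈ IC, ∀ ν : Fin c.nvars → D, (∀ i, ν i ∈ Dm) → c.holdsAt A ν

/-- `IC` is domain independent: for every instance, satisfaction of the
constraints depends only on the active domain. -/
def DomIndep (IC : Set (BIC Pred D ar)) : Prop :=
  ∀ (r : Instance Pred D ar) (A : Set D), ActDom r ⊆ A →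
    (SatSetOn r.atoms IC A ↔ SatSet r.atoms IC)

/-! ## Weak constraints and Dalal answer sets -/

/-- The violated ground instances of the weak constraints
`⇐ p′(x̄), not p(x̄)` and `⇐ ¬p′(x̄), p(x̄)` in `S` (a ground weak constraint
is violated by `S` iff all its body conditions hold in `S`). -/
def weakViol (ar : Pred → ℕ) (S : Set (Lit (GAtom Pred D))) :
    Set (Bool × DBAtom Pred D) :=
  {x | x.2.2.length = ar x.2.1 ∧
    ((x.1 = true ∧ Lit.pos (GAtom.primed x.2.1 x.2.2) ∈ S ∧
        Lit.pos (GAtom.base x.2.1 x.2.2) ∉ S) ∨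
     (x.1 = false ∧ Lit.neg (GAtom.primed x.2.1 x.2.2) ∈ S ∧
        Lit.pos (GAtom.base x.2.1 x.2.2) ∈ S))}

/-- Answer sets of the program `Π^D(r)` (the change program plus the weak
constraints): answer sets of `Π_Δ(r)` minimizing the number of violated
ground weak constraints. -/
def DalalAnswerSet (r : Instance Pred D ar) (IC : Set (BIC Pred D ar))
    (S : Set (Lit (GAtom Pred D))) : Prop :=
  AnswerSet S (changeProg r IC) ∧
    ∀ S' : Set (Lit (GAtom Pred D)), AnswerSet S' (changeProg r IC) →
      (weakViol ar S).ncard ≤ (weakViol ar S').ncard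

/-! ## Functional dependencies and unary constraints -/

/-- A unary integrity constraint: a BIC with at most one database literal. -/
def BIC.IsUnary (c : BIC Pred D ar) : Prop := c.pos.length + c.neg.length ≤ 1

/-- A functional dependency: a BIC of the form
`∀ (¬p(x̄,ȳ) ∨ ¬p(x̄,z̄) ∨ ȳ = z̄)` with pairwise distinct variables. -/
def BIC.IsFD (c : BIC Pred D ar) : Prop :=
  c.pos = [] ∧ ∃ (p : Pred) (xs ys zs : List (Fin c.nvars)),
    ys.length = zs.length ∧ (xs ++ ys ++ zs).Nodup ∧
    c.neg = [(p, xs ++ ys), (p, xs ++ zs)] ∧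
    ∀ ν : Fin c.nvars → D, (c.builtin ν ↔ ys.map ν = zs.map ν)

section Statement5Aux

variable {Pred D : Type} {ar : Pred → ℕ}

lemma SofRR_posBase (r r' : Instance Pred D ar) (p : Pred) (t : List D) :
    Lit.pos (GAtom.base p t) ∈ SofRR r r' ↔ (p, t) ∈ r.atoms := by
  constructor
  · rintro (((⟨a, ha, hE⟩ | ⟨a, ha, hE⟩) | ⟨a, _, _, hE⟩) | ⟨d, hE⟩) <;>
      simp at hE <;> (obtain ⟨rfl, rfl⟩ := hE; simpa using ha)
  · intro hp
    exact Or.inl (Or.inl (Or.inl ⟨(p, t), hp, rfl⟩))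

lemma SofRR_posPrimed (r r' : Instance Pred D ar) (p : Pred) (t : List D) :
    Lit.pos (GAtom.primed p t) ∈ SofRR r r' ↔ (p, t) ∈ r'.atoms := by
  constructor
  · rintro (((⟨a, ha, hE⟩ | ⟨a, ha, hE⟩) | ⟨a, _, _, hE⟩) | ⟨d, hE⟩) <;>
      simp at hE <;> (obtain ⟨rfl, rfl⟩ := hE; simpa using ha)
  · intro hp
    exact Or.inl (Or.inl (Or.inr ⟨(p, t), hp, rfl⟩))

lemma SofRR_negPrimed (r r' : Instance Pred D ar) (p : Pred) (t : List D) :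
    Lit.neg (GAtom.primed p t) ∈ SofRR r r' ↔ (t.length = ar p ∧ (p, t) ∉ r'.atoms) := by
  constructor
  · rintro (((⟨a, ha, hE⟩ | ⟨a, ha, hE⟩) | ⟨a, hlen, hn, hE⟩) | ⟨d, hE⟩) <;>
      simp at hE
    obtain ⟨rfl, rfl⟩ := hE
    exact ⟨hlen, by simpa using hn⟩
  · rintro ⟨hlen, hn⟩
    exact Or.inl (Or.inr ⟨(p, t), hlen, hn, rfl⟩)

lemma SofRR_posDom (r r' : Instance Pred D ar) (d : D) :
    Lit.pos (GAtom.dom d) ∈ SofRR r r' :=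
  Or.inr ⟨d, rfl⟩

lemma SofRR_negBase (r r' : Instance Pred D ar) (p : Pred) (t : List D) :
    Lit.neg (GAtom.base p t) ∉ SofRR r r' := by
  rintro (((⟨a, ha, hE⟩ | ⟨a, ha, hE⟩) | ⟨a, _, _, hE⟩) | ⟨d, hE⟩) <;> simp at hE

lemma SofRR_negDom (r r' : Instance Pred D ar) (d : D) :
    Lit.neg (GAtom.dom d) ∉ SofRR r r' := by
  rintro (((⟨a, ha, hE⟩ | ⟨a, ha, hE⟩) | ⟨a, _, _, hE⟩) | ⟨d', hE⟩) <;> simp at hE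

lemma SofRR_coherent (r r' : Instance Pred D ar) : Coherent (SofRR r r') := by
  rintro g ⟨hp, hn⟩
  cases g with
  | base p t => exact SofRR_negBase r r' p t hn
  | primed p t => exact ((SofRR_negPrimed r r' p t).1 hn).2 ((SofRR_posPrimed r r' p t).1 hp)
  | dom d => exact SofRR_negDom r r' d hn

/-- firing a rule of `P` through the reduct. -/
lemma fire {α : Type} {P : Program α} {S S' : Set (Lit α)} (hS' : SatProg S' (reduct P S))
    {R : Rule α} (hR : R ∈ P) (hn : ∀ L ∈ R.nbody, L ∉ S) (hb : R.body ⊆ S') :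
    ∃ L ∈ R.head, L ∈ S' :=
  hS' (Rule.mk R.head R.body ∅) ⟨R, hR, hn, rfl⟩ hb (fun L hL => absurd hL (Set.notMem_empty L))

/- rule membership lemmas -/
lemma mem_factBase (r : Instance Pred D ar) (IC : Set (BIC Pred D ar)) {a : DBAtom Pred D}
    (ha : a ∈ r.atoms) : fact (Lit.pos (GAtom.base a.1 a.2)) ∈ repairProg r IC :=
  Or.inl (Or.inl (Or.inl (Or.inl (Or.inl ⟨a, ha, rfl⟩))))

lemma mem_factDom (r : Instance Pred D ar) (IC : Set (BIC Pred D ar)) (d : D) :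
    fact (Lit.pos (GAtom.dom d)) ∈ repairProg r IC :=
  Or.inl (Or.inl (Or.inl (Or.inl (Or.inr ⟨d, trivial, rfl⟩))))

lemma mem_trig (r : Instance Pred D ar) (IC : Set (BIC Pred D ar)) {c : BIC Pred D ar}
    (hc : c ∈ IC) (ν : Fin c.nvars → D) (hb : ¬ c.builtin ν) :
    trigRule c ν ∈ repairProg r IC :=
  Or.inl (Or.inl (Or.inl (Or.inr ⟨c, hc, ν, fun _ => trivial, hb, rfl⟩)))

lemma mem_stabPos (r : Instance Pred D ar) (IC : Set (BIC Pred D ar)) {c : BIC Pred D ar}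
    (hc : c ∈ IC) (ν : Fin c.nvars → D) (hb : ¬ c.builtin ν) (j : Fin c.pos.length) :
    stabPosRule c ν j ∈ repairProg r IC :=
  Or.inl (Or.inl (Or.inr ⟨c, hc, ν, fun _ => trivial, hb, j, rfl⟩))

lemma mem_stabNeg (r : Instance Pred D ar) (IC : Set (BIC Pred D ar)) {c : BIC Pred D ar}
    (hc : c ∈ IC) (ν : Fin c.nvars → D) (hb : ¬ c.builtin ν) (j : Fin c.neg.length) :
    stabNegRule c ν j ∈ repairProg r IC :=
  Or.inl (Or.inr ⟨c, hc, ν, fun _ => trivial, hb, j, rfl⟩)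

lemma mem_persist1 (r : Instance Pred D ar) (IC : Set (BIC Pred D ar)) (p : Pred) (t : List D)
    (hlen : t.length = ar p) :
    Rule.mk {Lit.pos (GAtom.primed p t)} {Lit.pos (GAtom.base p t)}
      {Lit.neg (GAtom.primed p t)} ∈ repairProg r IC :=
  Or.inr ⟨p, t, hlen, fun _ _ => trivial, Or.inl rfl⟩

lemma mem_persist2 (r : Instance Pred D ar) (IC : Set (BIC Pred D ar)) (p : Pred) (t : List D)
    (hlen : t.length = ar p) :
    Rule.mk {Lit.neg (GAtom.primed p t)} {L | ∃ d ∈ t, L = Lit.pos (GAtom.dom d)}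
      {Lit.pos (GAtom.base p t), Lit.pos (GAtom.primed p t)} ∈ repairProg r IC :=
  Or.inr ⟨p, t, hlen, fun _ _ => trivial, Or.inr rfl⟩

/-- key: the head of the triggering rule is satisfied in `S(r,r')`. -/
lemma headSat {r r' : Instance Pred D ar} {IC : Set (BIC Pred D ar)} (hrep : SatIC r' IC)
    {c : BIC Pred D ar} (hc : c ∈ IC) (ν : Fin c.nvars → D) (hb : ¬ c.builtin ν) :
    ∃ L ∈ posHead c ν ∪ negHead c ν, L ∈ SofRR r r' := by
  rcases hrep c hc ν with (⟨a, ha, hmem⟩ | ⟨a, ha, hmem⟩ | hφ)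
  · exact ⟨_, Or.inl ⟨a, ha, rfl⟩, (SofRR_posPrimed r r' a.1 (a.2.map ν)).2 hmem⟩
  · exact ⟨_, Or.inr ⟨a, ha, rfl⟩,
      (SofRR_negPrimed r r' a.1 (a.2.map ν)).2
        ⟨by rw [List.length_map]; exact c.wfneg a ha, hmem⟩⟩
  · exact absurd hφ hb

end Statement5Aux

/-- Theorem `tw`, part 1. Let `r` be a database instance over
a finite domain `D` and `IC` a set of binary integrity constraints. For every
repair `r'` of `r` wrt `IC`, there exists an answer set `S` of the repair
program `Π(r)` such that `r' = {p(ā) | p′(ā) ∈ S}`. -/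
theorem statement5 {Pred D : Type} [Finite Pred] [Finite D] {ar : Pred → ℕ}
    (r r' : Instance Pred D ar) (IC : Set (BIC Pred D ar))
    (h : IsRepair r r' IC) :
    ∃ S : Set (Lit (GAtom Pred D)), AnswerSet S (repairProg r IC) ∧
      r'.atoms = primedAtoms S := by
  classical
  refine ⟨SofRR r r', ⟨SofRR_coherent r r', ?_, ?_⟩, ?_⟩
  · -- S(r,r') satisfies the reduct
    rintro R' ⟨R, hR, hnbR, rfl⟩ hbody -
    rcases hR with ((((⟨a, ha, rfl⟩ | ⟨d, -, rfl⟩) | ⟨c, hc, ν, -, hbν, rfl⟩) |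
        ⟨c, hc, ν, -, hbν, j, rfl⟩) | ⟨c, hc, ν, -, hbν, j, rfl⟩) |
        ⟨p, t, hlen, -, (rfl | rfl)⟩
    · exact ⟨_, rfl, (SofRR_posBase r r' a.1 a.2).2 (by simpa using ha)⟩
    · exact ⟨_, rfl, SofRR_posDom r r' d⟩
    · exact headSat h.1 hc ν hbν
    · have hjS : Lit.neg (GAtom.primed (c.pos.get j).1 ((c.pos.get j).2.map ν)) ∈ SofRR r r' :=
        hbody (Or.inr rfl)
      have hj : ((c.pos.get j).1, (c.pos.get j).2.map ν) ∉ r'.atoms :=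
        ((SofRR_negPrimed r r' _ _).1 hjS).2
      obtain ⟨L, hL, hLS⟩ := headSat h.1 hc ν hbν
      rcases hL with ⟨a, ha, rfl⟩ | hL
      · obtain ⟨i, hi⟩ := List.mem_iff_get.mp ha
        have hir : (a.1, a.2.map ν) ∈ r'.atoms := (SofRR_posPrimed r r' _ _).1 hLS
        have hij : i ≠ j := by rintro rfl; rw [hi] at hj; exact hj hir
        exact ⟨_, Or.inl ⟨i, hij, by rw [hi]⟩, hLS⟩
      · exact ⟨L, Or.inr hL, hLS⟩
    · have hjS : Lit.pos (GAtom.primed (c.neg.get j).1 ((c.neg.get j).2.map ν)) ∈ SofRR r r' :=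
        hbody (Or.inr rfl)
      have hj : ((c.neg.get j).1, (c.neg.get j).2.map ν) ∈ r'.atoms :=
        (SofRR_posPrimed r r' _ _).1 hjS
      obtain ⟨L, hL, hLS⟩ := headSat h.1 hc ν hbν
      rcases hL with hL | ⟨a, ha, rfl⟩
      · exact ⟨L, Or.inl hL, hLS⟩
      · obtain ⟨i, hi⟩ := List.mem_iff_get.mp ha
        have hir : (a.1, a.2.map ν) ∉ r'.atoms := ((SofRR_negPrimed r r' _ _).1 hLS).2
        have hij : i ≠ j := by rintro rfl; rw [hi] at hj; exact hir hj
        exact ⟨_, Or.inr ⟨i, hij, by rw [hi]⟩, hLS⟩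
    · have h1 : Lit.neg (GAtom.primed p t) ∉ SofRR r r' := hnbR _ rfl
      have h2 : (p, t) ∈ r'.atoms := by
        by_contra hn
        exact h1 ((SofRR_negPrimed r r' p t).2 ⟨hlen, hn⟩)
      exact ⟨_, rfl, (SofRR_posPrimed r r' p t).2 h2⟩
    · have h1 : Lit.pos (GAtom.primed p t) ∉ SofRR r r' := hnbR _ (Or.inr rfl)
      have h2 : (p, t) ∉ r'.atoms := fun hm => h1 ((SofRR_posPrimed r r' p t).2 hm)
      exact ⟨_, rfl, (SofRR_negPrimed r r' p t).2 ⟨hlen, h2⟩⟩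
  · -- minimality
    intro S' hsub hS'
    have hfactB : ∀ a ∈ r.atoms, Lit.pos (GAtom.base a.1 a.2) ∈ S' := by
      intro a ha
      obtain ⟨L, hL, hLS⟩ := fire hS' (mem_factBase r IC ha)
        (fun L hL => absurd hL (Set.notMem_empty L)) (Set.empty_subset S')
      exact hL ▸ hLS
    have hfactD : ∀ d : D, Lit.pos (GAtom.dom d) ∈ S' := by
      intro d
      obtain ⟨L, hL, hLS⟩ := fire hS' (mem_factDom r IC d)
        (fun L hL => absurd hL (Set.notMem_empty L)) (Set.empty_subset S')
      exact hL ▸ hLS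
    set r2set : Set (DBAtom Pred D) :=
      {a | (a ∈ r.atoms ∧ Lit.neg (GAtom.primed a.1 a.2) ∉ S') ∨
           (Lit.pos (GAtom.primed a.1 a.2) ∈ S' ∧ a ∉ r.atoms)} with hr2def
    have posp_imp : ∀ a : DBAtom Pred D, Lit.pos (GAtom.primed a.1 a.2) ∈ S' → a ∈ r2set := by
      intro a hp
      by_cases hr : a ∈ r.atoms
      · exact Or.inl ⟨hr, fun hn =>
          SofRR_coherent r r' (GAtom.primed a.1 a.2) ⟨hsub hp, hsub hn⟩⟩
      · exact Or.inr ⟨hp, hr⟩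
    have negp_imp : ∀ a : DBAtom Pred D, Lit.neg (GAtom.primed a.1 a.2) ∈ S' → a ∉ r2set := by
      rintro a hn (⟨_, hn'⟩ | ⟨hp, _⟩)
      · exact hn' hn
      · exact SofRR_coherent r r' (GAtom.primed a.1 a.2) ⟨hsub hp, hsub hn⟩
    have notmem1 : ∀ a ∈ r.atoms, a ∉ r2set → Lit.neg (GAtom.primed a.1 a.2) ∈ S' := by
      intro a ha hn
      by_contra hcon
      exact hn (Or.inl ⟨ha, hcon⟩)
    have mem2 : ∀ a : DBAtom Pred D, a ∉ r.atoms → a ∈ r2set →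
        Lit.pos (GAtom.primed a.1 a.2) ∈ S' := by
      rintro a ha (⟨h1, _⟩ | ⟨h1, _⟩)
      · exact absurd h1 ha
      · exact h1
    have hP1 : ∀ a ∈ r'.atoms, a ∈ r.atoms → Lit.pos (GAtom.primed a.1 a.2) ∈ S' := by
      intro a ha' har
      obtain ⟨L, hL, hLS⟩ := fire hS' (mem_persist1 r IC a.1 a.2 (r.wf a har))
        (by rintro L rfl hmem
            exact ((SofRR_negPrimed r r' a.1 a.2).1 hmem).2 (by simpa using ha'))
        (by rintro L rfl; exact hfactB a har)
      exact hL ▸ hLS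
    have hP2 : ∀ a : DBAtom Pred D, a.2.length = ar a.1 → a ∉ r.atoms → a ∉ r'.atoms →
        Lit.neg (GAtom.primed a.1 a.2) ∈ S' := by
      intro a hlen har har'
      obtain ⟨L, hL, hLS⟩ := fire hS' (mem_persist2 r IC a.1 a.2 hlen)
        (by rintro L (rfl | rfl) hmem
            · exact har (by simpa using (SofRR_posBase r r' a.1 a.2).1 hmem)
            · exact har' ((SofRR_posPrimed r r' a.1 a.2).1 hmem))
        (by rintro L ⟨d, hd, rfl⟩; exact hfactD d)
      exact hL ▸ hLS
    have hsat2 : SatSet r2set IC := by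
      intro c hc ν
      by_contra hviol
      simp only [BIC.holdsAt] at hviol
      push_neg at hviol
      obtain ⟨hp, hq, hbν⟩ := hviol
      have headKill : ∀ L ∈ posHead c ν ∪ negHead c ν, L ∉ S' := by
        rintro L (⟨a, ha, rfl⟩ | ⟨a, ha, rfl⟩) hLS
        · exact hp a ha (posp_imp _ hLS)
        · exact negp_imp _ hLS (hq a ha)
      by_cases hcp : ∃ a ∈ c.pos, (a.1, a.2.map ν) ∈ r.atoms
      · obtain ⟨a, ha, har⟩ := hcp
        obtain ⟨j, hj⟩ := List.mem_iff_get.mp ha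
        have hnegp : Lit.neg (GAtom.primed a.1 (a.2.map ν)) ∈ S' :=
          notmem1 _ har (hp a ha)
        obtain ⟨L, hL, hLS⟩ := fire hS' (mem_stabPos r IC hc ν hbν j)
          (fun L hL => absurd hL (Set.notMem_empty L))
          (by rintro L (⟨v, hv, rfl⟩ | rfl)
              · exact hfactD _
              · rw [hj]; exact hnegp)
        rcases hL with ⟨i, hij, rfl⟩ | hL
        · exact headKill _ (Or.inl ⟨c.pos.get i, List.get_mem _ _, rfl⟩) hLS
        · exact headKill _ (Or.inr hL) hLS
      by_cases hcq : ∃ a ∈ c.neg, (a.1, a.2.map ν) ∉ r.atoms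
      · obtain ⟨a, ha, har⟩ := hcq
        obtain ⟨j, hj⟩ := List.mem_iff_get.mp ha
        have hposp : Lit.pos (GAtom.primed a.1 (a.2.map ν)) ∈ S' :=
          mem2 _ har (hq a ha)
        obtain ⟨L, hL, hLS⟩ := fire hS' (mem_stabNeg r IC hc ν hbν j)
          (fun L hL => absurd hL (Set.notMem_empty L))
          (by rintro L (⟨v, hv, rfl⟩ | rfl)
              · exact hfactD _
              · rw [hj]; exact hposp)
        rcases hL with hL | ⟨i, hij, rfl⟩
        · exact headKill _ (Or.inl hL) hLS
        · exact headKill _ (Or.inr ⟨c.neg.get i, List.get_mem _ _, rfl⟩) hLS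
      push_neg at hcp hcq
      obtain ⟨L, hL, hLS⟩ := fire hS' (mem_trig r IC hc ν hbν)
        (by rintro L ⟨a, ha, rfl⟩ hmem
            exact hcp a ha ((SofRR_posBase r r' _ _).1 hmem))
        (by rintro L (⟨v, hv, rfl⟩ | ⟨a, ha, rfl⟩)
            · exact hfactD _
            · exact hfactB _ (hcq a ha))
      exact headKill L hL hLS
    have hr2sub : r2set ⊆ r.atoms ∪ r'.atoms := by
      rintro a (⟨h1, _⟩ | ⟨h1, _⟩)
      · exact Or.inl h1
      · right
        have := (SofRR_posPrimed r r' a.1 a.2).1 (hsub h1)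
        simpa using this
    have hr2wf : ∀ a ∈ r2set, a.2.length = ar a.1 := by
      intro a ha
      rcases hr2sub ha with hm | hm
      · exact r.wf a hm
      · exact r'.wf a hm
    let r2 : Instance Pred D ar := ⟨r2set, (r.finite.union r'.finite).subset hr2sub, hr2wf⟩
    have hΔsub : symmDiff r.atoms r2.atoms ⊆ symmDiff r.atoms r'.atoms := by
      intro a haD
      rw [Set.mem_symmDiff] at haD ⊢
      rcases haD with ⟨har, hnr2⟩ | ⟨hr2, har⟩
      · left
        refine ⟨har, fun hr'm => ?_⟩
        have hng := notmem1 a har hnr2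
        exact ((SofRR_negPrimed r r' a.1 a.2).1 (hsub hng)).2 (by simpa using hr'm)
      · right
        have hpg := mem2 a har hr2
        exact ⟨by simpa using (SofRR_posPrimed r r' a.1 a.2).1 (hsub hpg), har⟩
    have hΔeq := h.2 r2 hsat2 hΔsub
    have hSsub : SofRR r r' ⊆ S' := by
      rintro L (((⟨a, ha, rfl⟩ | ⟨a, ha, rfl⟩) | ⟨a, hlen, hnr', rfl⟩) | ⟨d, rfl⟩)
      · exact hfactB a ha
      · by_cases har : a ∈ r.atoms
        · exact hP1 a ha har
        · have haΔ : a ∈ symmDiff r.atoms r2.atoms := by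
            rw [hΔeq, Set.mem_symmDiff]; exact Or.inr ⟨ha, har⟩
          rw [Set.mem_symmDiff] at haΔ
          rcases haΔ with ⟨h1, _⟩ | ⟨h1, _⟩
          · exact absurd h1 har
          · exact mem2 a har h1
      · by_cases har : a ∈ r.atoms
        · have haΔ : a ∈ symmDiff r.atoms r2.atoms := by
            rw [hΔeq, Set.mem_symmDiff]; exact Or.inl ⟨har, hnr'⟩
          rw [Set.mem_symmDiff] at haΔ
          rcases haΔ with ⟨_, h2⟩ | ⟨_, h2⟩
          · exact notmem1 a har h2
          · exact absurd har h2
        · exact hP2 a hlen har hnr'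
      · exact hfactD d
    exact Set.Subset.antisymm hsub hSsub
  · -- r'.atoms = primedAtoms S
    ext a
    constructor
    · intro ha
      exact (SofRR_posPrimed r r' a.1 a.2).2 (by simpa using ha)
    · intro ha
      simpa using (SofRR_posPrimed r r' a.1 a.2).1 ha


end CQA
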